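/- Let x_i, x_j be F-dimensional random vectors as in Assumption 1 with per-feature covariances σ_f ∈ [0,1), and let g_i, g_j be the first-order Taylor linearizations of two clients' gradient functions around the feature means with partial-derivative products a_f·b_f > 0 for all f. Then the map (σ_1,...,σ_F) ↦ (I(x_i;x_j), Cov(g_i,g_j)) = (-(1/2)Σ_f log(1-σ_f²), Σ_f σ_f a_f b_f) is such that both coordinates are strictly increasing in each σ_f; consequently, along any path where all σ_f decrease, mutual information and gradient covariance decrease together. -/
import Mathlib


/-- Theorem 1 (composite): with per-feature covariances `σ_f ∈ [0,1)` and
partial-derivative products `a_f b_f > 0`, both the mutual information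
`-(1/2) Σ_f log (1 - σ_f²)` and the linearized gradient covariance
`Σ_f σ_f a_f b_f` are strictly increasing in each `σ_f`: along any path where all
`σ_f` decrease (strictly for some `f`), mutual information and gradient covariance
decrease together. -/
theorem MI_and_cov_decrease_together
    (F : ℕ) (a b σ σ' : Fin F → ℝ)
    (hab : ∀ f, 0 < a f * b f)
    (hσ : ∀ f, σ f ∈ Set.Ico (0 : ℝ) 1)
    (hσ' : ∀ f, σ' f ∈ Set.Ico (0 : ℝ) 1)
    (hle : ∀ f, σ' f ≤ σ f) (hlt : ∃ f, σ' f < σ f) :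
    (-(1 / 2) * ∑ f, Real.log (1 - σ' f ^ 2)
        < -(1 / 2) * ∑ f, Real.log (1 - σ f ^ 2)) ∧
    (∑ f, σ' f * a f * b f < ∑ f, σ f * a f * b f) := by
  obtain ⟨f₀, hf₀⟩ := hlt
  have hpos : ∀ f, (0:ℝ) < 1 - σ f ^ 2 := by
    intro f
    obtain ⟨h0, h1⟩ := hσ f
    nlinarith
  have hpos' : ∀ f, (0:ℝ) < 1 - σ' f ^ 2 := by
    intro f
    obtain ⟨h0, h1⟩ := hσ' f
    nlinarith
  constructor
  · have hsum : ∑ f, Real.log (1 - σ f ^ 2) < ∑ f, Real.log (1 - σ' f ^ 2) := by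
      apply Finset.sum_lt_sum
      · intro f _
        apply Real.log_le_log (hpos f)
        have h0 := (hσ' f).1
        have := hle f
        nlinarith
      · refine ⟨f₀, Finset.mem_univ _, ?_⟩
        apply Real.log_lt_log (hpos f₀)
        have h0 := (hσ' f₀).1
        have := hle f₀
        nlinarith
    linarith
  · apply Finset.sum_lt_sum
    · intro f _
      have := hab f
      have := hle f
      nlinarith
    · refine ⟨f₀, Finset.mem_univ _, ?_⟩
      have := hab f₀
      nlinarith
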